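/- In the symmetric group S_n over n ≥ p elements, let x be a permutation of cycle type (1)^{n-ip}(p)^i (a product of i disjoint p-cycles) with p prime and p not dividing i. Then the image of x in the abelianization of its centralizer C_{S_n}(x), reduced mod p, is nontrivial; i.e., x ∉ [C_{S_n}(x), C_{S_n}(x)] · C_{S_n}(x)^p. In particular x is a non-Schur p-element of S_n. -/

import Mathlib

open Equiv Equiv.Perm Finset

namespace NonSchurAux

variable {p n i : ℕ}

section
variable (x : Equiv.Perm (Fin n))

/-- representative of the cycle of `a` -/
noncomputable def rep (a : Fin n) : Fin n :=
  if h : a ∈ x.support then ((x.cycleOf a).support).min' ⟨a, by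
    rw [Equiv.Perm.mem_support_cycleOf_iff]; exact ⟨Equiv.Perm.SameCycle.refl _ _, h⟩⟩ else a

variable {x}

lemma rep_mem {a : Fin n} (ha : a ∈ x.support) : rep x a ∈ (x.cycleOf a).support := by
  rw [rep, dif_pos ha]; exact Finset.min'_mem _ _

lemma sameCycle_rep {a : Fin n} (ha : a ∈ x.support) : x.SameCycle (rep x a) a :=
  ((Equiv.Perm.mem_support_cycleOf_iff.mp (rep_mem ha)).1).symm

lemma rep_mem_support {a : Fin n} (ha : a ∈ x.support) : rep x a ∈ x.support :=
  x.support_cycleOf_le a (rep_mem ha)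

lemma rep_eq_of_sameCycle {a b : Fin n} (ha : a ∈ x.support) (h : x.SameCycle a b) :
    rep x a = rep x b := by
  have hb : b ∈ x.support := by
    rcases h with ⟨j, rfl⟩
    simpa using ha
  have key : ∀ (s t : Finset (Fin n)) (e : s = t) (hs : s.Nonempty) (ht : t.Nonempty),
      s.min' hs = t.min' ht := by rintro s t rfl _ _; rfl
  rw [rep, dif_pos ha, rep, dif_pos hb]
  exact key _ _ (congrArg Equiv.Perm.support h.cycleOf_eq) _ _

lemma rep_rep {a : Fin n} (ha : a ∈ x.support) : rep x (rep x a) = rep x a :=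
  rep_eq_of_sameCycle (rep_mem_support ha) (sameCycle_rep ha)
end

section
variable {x : Equiv.Perm (Fin n)}

open scoped Classical in
/-- discrete log of `a` relative to the representative of its cycle -/
noncomputable def dlog (p : ℕ) (x : Equiv.Perm (Fin n)) (a : Fin n) : ZMod p :=
  if h : ∃ k : ZMod p, (x ^ k.val) (rep x a) = a then h.choose else 0

lemma pow_mod (hx1 : x ^ p = 1) (m : ℕ) : x ^ (m % p) = x ^ m := by
  conv_rhs => rw [← Nat.div_add_mod m p, pow_add, pow_mul, hx1, one_pow, one_mul]

lemma exists_dlog (hp : p.Prime) (hx1 : x ^ p = 1) {a : Fin n} (ha : a ∈ x.support) :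
    ∃ k : ZMod p, (x ^ k.val) (rep x a) = a := by
  haveI : NeZero p := ⟨hp.pos.ne'⟩
  obtain ⟨j, hj, hja⟩ := (sameCycle_rep ha).exists_pow_eq'
  refine ⟨(j : ZMod p), ?_⟩
  rwa [ZMod.val_natCast, pow_mod hx1]

lemma dvd_of_pow_apply_eq (hcard : ∀ a ∈ x.support, (x.cycleOf a).support.card = p)
    {b : Fin n} (hb : b ∈ x.support) {m : ℕ} (h : (x ^ m) b = b) : p ∣ m := by
  have hb' : x b ≠ b := Equiv.Perm.mem_support.mp hb
  have hc : (x.cycleOf b).IsCycle := x.isCycle_cycleOf hb'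
  have h1 : (x.cycleOf b) ^ m = 1 := by
    rw [hc.pow_eq_one_iff' (by rwa [Equiv.Perm.cycleOf_apply_self])]
    rw [Equiv.Perm.cycleOf_pow_apply_self]; exact h
  have := orderOf_dvd_of_pow_eq_one h1
  rwa [hc.orderOf, hcard b hb] at this

lemma dlog_unique (hp : p.Prime) (hx1 : x ^ p = 1)
    (hcard : ∀ a ∈ x.support, (x.cycleOf a).support.card = p)
    {a : Fin n} (ha : a ∈ x.support) {k k' : ZMod p}
    (h : (x ^ k.val) (rep x a) = (x ^ k'.val) (rep x a)) : k = k' := by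
  haveI : NeZero p := ⟨hp.pos.ne'⟩
  have hb : rep x a ∈ x.support := rep_mem_support ha
  have h2 : (x ^ (p - k'.val + k.val)) (rep x a) = rep x a := by
    rw [pow_add, Equiv.Perm.mul_apply, h, ← Equiv.Perm.mul_apply, ← pow_add,
      Nat.sub_add_cancel (ZMod.val_lt k').le, hx1, Equiv.Perm.one_apply]
  have hdvd := dvd_of_pow_apply_eq hcard hb h2
  have : ((p - k'.val + k.val : ℕ) : ZMod p) = 0 := by
    exact_mod_cast (ZMod.natCast_eq_zero_iff _ _).mpr hdvd
  rw [Nat.cast_add, Nat.cast_sub (ZMod.val_lt k').le, ZMod.natCast_self, zero_sub,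
    ZMod.natCast_val, ZMod.cast_id, ZMod.natCast_val, ZMod.cast_id] at this
  linear_combination this

lemma dlog_spec (hp : p.Prime) (hx1 : x ^ p = 1) {a : Fin n} (ha : a ∈ x.support) :
    (x ^ (dlog p x a).val) (rep x a) = a := by
  rw [dlog, dif_pos (exists_dlog hp hx1 ha)]
  exact (exists_dlog hp hx1 ha).choose_spec

lemma dlog_eq_iff (hp : p.Prime) (hx1 : x ^ p = 1)
    (hcard : ∀ a ∈ x.support, (x.cycleOf a).support.card = p)
    {a : Fin n} (ha : a ∈ x.support) {k : ZMod p} :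
    dlog p x a = k ↔ (x ^ k.val) (rep x a) = a := by
  constructor
  · rintro rfl; exact dlog_spec hp hx1 ha
  · intro h
    exact dlog_unique hp hx1 hcard ha (by rw [dlog_spec hp hx1 ha, h])

end

section
variable {x g h : Equiv.Perm (Fin n)}

lemma apply_pow_comm (hg : Commute x g) (m : ℕ) (a : Fin n) :
    g ((x ^ m) a) = (x ^ m) (g a) := by
  rw [← Equiv.Perm.mul_apply, ← Equiv.Perm.mul_apply, (hg.symm.pow_right m)]

lemma mem_support_apply (hg : Commute x g) {a : Fin n} :
    g a ∈ x.support ↔ a ∈ x.support := by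
  simp only [Equiv.Perm.mem_support]
  have hxg : x (g a) = g (x a) := by
    have := apply_pow_comm hg 1 a
    simpa using this.symm
  rw [hxg]
  exact g.injective.ne_iff

lemma sameCycle_apply (hg : Commute x g) {a b : Fin n} (hab : x.SameCycle a b) :
    x.SameCycle (g a) (g b) := by
  obtain ⟨j, rfl⟩ := hab
  refine ⟨j, ?_⟩
  rw [← Equiv.Perm.mul_apply, ← Equiv.Perm.mul_apply, (hg.symm.zpow_right j)]

lemma rep_apply (hg : Commute x g) {a : Fin n} (ha : a ∈ x.support) :
    rep x (g a) = rep x (g (rep x a)) :=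
  rep_eq_of_sameCycle ((mem_support_apply hg).mpr ha)
    (sameCycle_apply hg (sameCycle_rep ha).symm)

lemma dlog_apply (hp : p.Prime) (hx1 : x ^ p = 1)
    (hcard : ∀ a ∈ x.support, (x.cycleOf a).support.card = p)
    (hg : Commute x g) {c : Fin n} (hc : c ∈ x.support) :
    dlog p x (g c) = dlog p x c + dlog p x (g (rep x c)) := by
  haveI : NeZero p := ⟨hp.pos.ne'⟩
  have hb : rep x c ∈ x.support := rep_mem_support hc
  have hgb : g (rep x c) ∈ x.support := (mem_support_apply hg).mpr hb
  have hgc : g c ∈ x.support := (mem_support_apply hg).mpr hc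
  rw [dlog_eq_iff hp hx1 hcard hgc]
  have hrep : rep x (g c) = rep x (g (rep x c)) := rep_apply hg hc
  have h1 : (x ^ (dlog p x (g (rep x c))).val) (rep x (g (rep x c))) = g (rep x c) :=
    dlog_spec hp hx1 hgb
  have h2 : (x ^ (dlog p x c).val) (rep x c) = c := dlog_spec hp hx1 hc
  rw [ZMod.val_add, pow_mod hx1, hrep, pow_add, Equiv.Perm.mul_apply, h1,
    ← apply_pow_comm hg, h2]

variable (p x) in
/-- the set of cycle representatives in the support -/
noncomputable def R : Finset (Fin n) := x.support.filter (fun a => rep x a = a)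

variable (p x) in
/-- the abelianization invariant -/
noncomputable def phi (g : Equiv.Perm (Fin n)) : ZMod p := ∑ b ∈ R x, dlog p x (g b)

lemma mem_R {a : Fin n} : a ∈ R x ↔ a ∈ x.support ∧ rep x a = a := Finset.mem_filter

lemma rep_mem_R {a : Fin n} (ha : a ∈ x.support) : rep x a ∈ R x :=
  mem_R.mpr ⟨rep_mem_support ha, rep_rep ha⟩

lemma phi_one (hp : p.Prime) (hx1 : x ^ p = 1)
    (hcard : ∀ a ∈ x.support, (x.cycleOf a).support.card = p) :
    phi p x 1 = 0 := by
  haveI : NeZero p := ⟨hp.pos.ne'⟩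
  refine Finset.sum_eq_zero fun b hb => ?_
  obtain ⟨hbs, hbr⟩ := mem_R.mp hb
  simp only [Equiv.Perm.one_apply]
  rw [dlog_eq_iff hp hx1 hcard hbs, ZMod.val_zero, pow_zero, Equiv.Perm.one_apply, hbr]

lemma phi_mul (hp : p.Prime) (hx1 : x ^ p = 1)
    (hcard : ∀ a ∈ x.support, (x.cycleOf a).support.card = p)
    (hg : Commute x g) (hh : Commute x h) :
    phi p x (g * h) = phi p x g + phi p x h := by
  have key : ∀ b ∈ R x, dlog p x ((g * h) b) = dlog p x (h b) + dlog p x (g (rep x (h b))) := by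
    intro b hb
    obtain ⟨hbs, hbr⟩ := mem_R.mp hb
    rw [Equiv.Perm.mul_apply]
    exact dlog_apply hp hx1 hcard hg ((mem_support_apply hh).mpr hbs)
  rw [phi, Finset.sum_congr rfl key, Finset.sum_add_distrib]
  have h2 : ∑ b ∈ R x, dlog p x (g (rep x (h b))) = phi p x g := by
    refine Finset.sum_nbij' (i := fun b => rep x (h b)) (j := fun b => rep x (h⁻¹ b))
      ?_ ?_ ?_ ?_ ?_
    · intro b hb
      exact rep_mem_R ((mem_support_apply hh).mpr (mem_R.mp hb).1)
    · intro b hb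
      exact rep_mem_R ((mem_support_apply hh.inv_right).mpr (mem_R.mp hb).1)
    · intro b hb
      obtain ⟨hbs, hbr⟩ := mem_R.mp hb
      have := rep_apply hh.inv_right ((mem_support_apply hh).mpr hbs)
      show rep x (h⁻¹ (rep x (h b))) = b
      rw [← this, ← Equiv.Perm.mul_apply, inv_mul_cancel, Equiv.Perm.one_apply, hbr]
    · intro b hb
      obtain ⟨hbs, hbr⟩ := mem_R.mp hb
      have := rep_apply hh ((mem_support_apply hh.inv_right).mpr hbs)
      show rep x (h (rep x (h⁻¹ b))) = b
      rw [← this, ← Equiv.Perm.mul_apply, mul_inv_cancel, Equiv.Perm.one_apply, hbr]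
    · intro b hb; rfl
  rw [h2, add_comm]
  rfl

lemma sameCycle_of_cycleOf_eq {a b : Fin n} (hb : b ∈ x.support)
    (hab : x.cycleOf a = x.cycleOf b) : x.SameCycle a b := by
  have : b ∈ (x.cycleOf a).support := by
    rw [hab, Equiv.Perm.mem_support_cycleOf_iff]
    exact ⟨Equiv.Perm.SameCycle.refl _ _, hb⟩
  exact (Equiv.Perm.mem_support_cycleOf_iff.mp this).1

lemma card_R (hct : x.cycleType = Multiset.replicate i p) : (R x).card = i := by
  have : (R x).card = x.cycleFactorsFinset.card := by
    refine Finset.card_bij (fun b _ => x.cycleOf b) ?_ ?_ ?_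
    · intro b hb
      exact Equiv.Perm.cycleOf_mem_cycleFactorsFinset_iff.mpr (mem_R.mp hb).1
    · intro b hb b' hb' hcyc
      obtain ⟨hbs, hbr⟩ := mem_R.mp hb
      obtain ⟨hbs', hbr'⟩ := mem_R.mp hb'
      rw [← hbr, ← hbr']
      exact rep_eq_of_sameCycle hbs (sameCycle_of_cycleOf_eq hbs' hcyc)
    · intro c hcf
      have hc := (Equiv.Perm.mem_cycleFactorsFinset_iff.mp hcf).1
      obtain ⟨a, ha⟩ := hc.nonempty_support
      have hceq : c = x.cycleOf a := Equiv.Perm.cycle_is_cycleOf ha hcf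
      have has : a ∈ x.support := by
        apply x.support_cycleOf_le a
        rwa [← hceq]
      refine ⟨rep x a, rep_mem_R has, ?_⟩
      rw [hceq]
      exact (sameCycle_rep has).cycleOf_eq
  have h1 : Multiset.card x.cycleType = i := by rw [hct]; simp
  have h2 : Multiset.card x.cycleType = x.cycleFactorsFinset.card := by
    rw [Equiv.Perm.cycleType_def]; simp
  rw [this, ← h2, h1]

lemma phi_x (hp : p.Prime) (hx1 : x ^ p = 1)
    (hcard : ∀ a ∈ x.support, (x.cycleOf a).support.card = p)
    (hct : x.cycleType = Multiset.replicate i p) :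
    phi p x x = (i : ZMod p) := by
  haveI : NeZero p := ⟨hp.pos.ne'⟩
  haveI : Fact (1 < p) := ⟨hp.one_lt⟩
  have key : ∀ b ∈ R x, dlog p x (x b) = 1 := by
    intro b hb
    obtain ⟨hbs, hbr⟩ := mem_R.mp hb
    have hxb : x b ∈ x.support := Equiv.Perm.apply_mem_support.mpr hbs
    rw [dlog_eq_iff hp hx1 hcard hxb]
    have : rep x (x b) = b := by
      rw [← rep_eq_of_sameCycle hbs ⟨1, by simp⟩, hbr]
    rw [this, ZMod.val_one, pow_one]
  rw [phi, Finset.sum_congr rfl key, Finset.sum_const, card_R hct, nsmul_eq_mul, mul_one]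

end

section
variable {x : Equiv.Perm (Fin n)}

lemma x_pow_p (hct : x.cycleType = Multiset.replicate i p) : x ^ p = 1 := by
  rw [← orderOf_dvd_iff_pow_eq_one, ← Equiv.Perm.lcm_cycleType, hct]
  refine Multiset.lcm_dvd.mpr fun q hq => ?_
  rw [Multiset.eq_of_mem_replicate hq]

lemma card_cycleOf (hct : x.cycleType = Multiset.replicate i p) :
    ∀ a ∈ x.support, (x.cycleOf a).support.card = p := by
  intro a ha
  have hmem : (x.cycleOf a).support.card ∈ x.cycleType := by
    rw [Equiv.Perm.cycleType_def]
    exact Multiset.mem_map_of_mem _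
      (Finset.mem_def.mp (Equiv.Perm.cycleOf_mem_cycleFactorsFinset_iff.mpr ha))
  rw [hct] at hmem
  exact Multiset.eq_of_mem_replicate hmem

lemma order_x (hp : p.Prime) (hi0 : i ≠ 0) (hct : x.cycleType = Multiset.replicate i p) :
    orderOf x = p := by
  refine Nat.dvd_antisymm (orderOf_dvd_iff_pow_eq_one.mpr (x_pow_p hct)) ?_
  rw [← Equiv.Perm.lcm_cycleType, hct]
  exact Multiset.dvd_lcm (by simp [Multiset.mem_replicate, hi0])

lemma exists_hom (hp : p.Prime) (hct : x.cycleType = Multiset.replicate i p)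
    (hx : x ∈ Subgroup.centralizer {x}) :
    ∃ Φ : ↥(Subgroup.centralizer ({x} : Set (Equiv.Perm (Fin n)))) →* Multiplicative (ZMod p),
      Φ ⟨x, hx⟩ = Multiplicative.ofAdd (i : ZMod p) := by
  have hx1 := x_pow_p hct
  have hcard := card_cycleOf hct
  have hcomm : ∀ g ∈ Subgroup.centralizer ({x} : Set (Equiv.Perm (Fin n))), Commute x g :=
    fun g hg => (Subgroup.mem_centralizer_singleton_iff.mp hg).symm
  refine ⟨{ toFun := fun g => Multiplicative.ofAdd (phi p x g.1),
            map_one' := ?_, map_mul' := ?_ }, ?_⟩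
  · show Multiplicative.ofAdd (phi p x (1 : Equiv.Perm (Fin n))) = 1
    rw [phi_one hp hx1 hcard]; rfl
  · intro g h
    show Multiplicative.ofAdd (phi p x (g.1 * h.1)) = _
    rw [phi_mul hp hx1 hcard (hcomm _ g.2) (hcomm _ h.2)]
    rfl
  · show Multiplicative.ofAdd (phi p x x) = _
    rw [phi_x hp hx1 hcard hct]

end

end NonSchurAux

/-- A non-Schur element of a group G is an element x with x ∉ [C_G(x), C_G(x)]. -/
def IsNonSchur {G : Type*} [Group G] (x : G) : Prop :=
  x ∉ ⁅Subgroup.centralizer {x}, Subgroup.centralizer {x}⁆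

/-- A p-element is an element of p-power order. -/
def IsPElement (p : ℕ) {G : Type*} [Group G] (x : G) : Prop :=
  ∃ n : ℕ, orderOf x = p ^ n

/-- A product of i disjoint p-cycles in S_n (p prime, p ∤ i) has nontrivial image in
the mod-p abelianization of its centralizer; in particular it is a non-Schur p-element. -/
theorem perm_prod_p_cycles_nonSchur (p n i : ℕ) (hp : p.Prime) (hn : p ≤ n) (hi : ¬ p ∣ i)
    (x : Equiv.Perm (Fin n)) (hct : x.cycleType = Multiset.replicate i p)
    (hx : x ∈ Subgroup.centralizer {x}) :
    (Abelianization.of (⟨x, hx⟩ : ↥(Subgroup.centralizer ({x} : Set (Equiv.Perm (Fin n)))))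
        ∉ (powMonoidHom p : Abelianization ↥(Subgroup.centralizer ({x} : Set (Equiv.Perm (Fin n)))) →*
            Abelianization ↥(Subgroup.centralizer ({x} : Set (Equiv.Perm (Fin n))))).range) ∧
      IsPElement p x ∧ IsNonSchur x := by
  obtain ⟨Φ, hΦ⟩ := NonSchurAux.exists_hom hp hct hx
  have hi' : (i : ZMod p) ≠ 0 := by
    rwa [Ne, ZMod.natCast_eq_zero_iff]
  have hi0 : i ≠ 0 := by rintro rfl; exact hi (dvd_zero p)
  have hz : ∀ z : Multiplicative (ZMod p), z ^ p = 1 := by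
    intro z
    rw [← ofAdd_toAdd z, ← ofAdd_nsmul]
    have : p • z.toAdd = 0 := by
      rw [nsmul_eq_mul, ZMod.natCast_self, zero_mul]
    rw [this]; rfl
  have hΦx : Φ ⟨x, hx⟩ ≠ 1 := by
    rw [hΦ]
    intro h
    exact hi' (by simpa using h)
  refine ⟨?_, ⟨1, by rw [pow_one, NonSchurAux.order_x hp hi0 hct]⟩, ?_⟩
  · rintro ⟨y, hy⟩
    have := congrArg (Abelianization.lift Φ) hy
    rw [Abelianization.lift_apply_of, hΦ, powMonoidHom_apply, map_pow, hz] at this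
    exact hi' (by simpa using this.symm)
  · intro hmem
    have hle : (⁅Subgroup.centralizer {x}, Subgroup.centralizer {x}⁆ :
          Subgroup (Equiv.Perm (Fin n))) =
        Subgroup.map (Subgroup.centralizer {x}).subtype
          (commutator ↥(Subgroup.centralizer ({x} : Set (Equiv.Perm (Fin n))))) := by
      rw [commutator, Subgroup.map_commutator, ← MonoidHom.range_eq_map, Subgroup.range_subtype]
    rw [hle] at hmem
    obtain ⟨z, hz', hzx⟩ := hmem
    have hzz : z = ⟨x, hx⟩ := Subtype.ext hzx
    subst hzz
    exact hΦx (Abelianization.commutator_subset_ker Φ hz')
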